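/- Let E₁ ⊆ E₂ be sets of relational variables. For any assignment χ₁ : E₁ → {0,1} satisfying all transitivity constraints over E₁, there exists an assignment χ₂ : E₂ → {0,1} extending χ₁ on E₁ that satisfies all transitivity constraints over E₂. -/

import Mathlib

/-- The list of edges of the cycle determined by vertex list `l = [i₁,…,i_k]`:
successive pairs plus the closing edge `(i_k, i₁)`. -/
def cycEdges (l : List ℕ) : List (ℕ × ℕ) := l.zip (l.rotate 1)

/-- `l` is (the vertex list of) a cycle in the graph `G(E)`. -/
def IsCycle (E : ℕ → ℕ → Prop) (l : List ℕ) : Prop :=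
  3 ≤ l.length ∧ ∀ p ∈ cycEdges l, E p.1 p.2

/-- The number of 0-edges of the cycle `l` under the labeling `χ`. -/
def numZeroEdges (χ : ℕ → ℕ → Bool) (l : List ℕ) : ℕ :=
  ((cycEdges l).filter (fun p => !χ p.1 p.2)).length

/-- The assignment `χ` violates some transitivity constraint
`e_{[i₁,i₂]} ∧ ⋯ ∧ e_{[i_{k-1},i_k]} ⇒ e_{[i₁,i_k]}` over `E`. -/
def ViolatesTrans (E : ℕ → ℕ → Prop) (χ : ℕ → ℕ → Bool) : Prop :=
  ∃ l : List ℕ, 3 ≤ l.length ∧ l.Chain' E ∧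
    (∀ p ∈ l.zip l.tail, χ p.1 p.2 = true) ∧
    E (l.headD 0) (l.getLastD 0) ∧ χ (l.headD 0) (l.getLastD 0) = false

/-- The simple cycle (or acyclic path) `l` has a chord: an edge of `G(E)` joining two
vertices at positions `p < q` that are not adjacent in the cycle. -/
def HasChord (E : ℕ → ℕ → Prop) (l : List ℕ) : Prop :=
  ∃ p q : ℕ, p < q ∧ q < l.length ∧ p + 1 < q ∧ ¬(p = 0 ∧ q = l.length - 1) ∧
    E (l.getD p 0) (l.getD q 0)

/-- `χ` satisfies all transitivity constraints over `E`: no cycle of the labeled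
graph `G(E,χ)` has exactly one 0-edge. -/
def SatisfiesTrans (E : ℕ → ℕ → Prop) (χ : ℕ → ℕ → Bool) : Prop :=
  ¬ ∃ l : List ℕ, IsCycle E l ∧ numZeroEdges χ l = 1

section Aux

private lemma length_cycEdges (l : List ℕ) : (cycEdges l).length = l.length := by
  simp [cycEdges]

private lemma zip_append_last : ∀ (t : List ℕ) (a c : ℕ),
    (a :: t).zip (t ++ [c]) = (a :: t).zip t ++ [(t.getLastD a, c)]
  | [], a, c => by simp
  | b :: s, a, c => by
    simp only [List.cons_append, List.zip_cons_cons, zip_append_last s b c,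
      List.getLastD_cons]

private lemma cycEdges_cons (a : ℕ) (t : List ℕ) :
    cycEdges (a :: t) = (a :: t).zip t ++ [(t.getLastD a, a)] := by
  have h1 : (a :: t).rotate 1 = t ++ [a] := by
    simpa using List.rotate_cons_succ t a 0
  rw [cycEdges, h1, zip_append_last]

private lemma cycEdges_rotate (l : List ℕ) (n : ℕ) :
    cycEdges (l.rotate n) = (cycEdges l).rotate n := by
  rcases Nat.eq_zero_or_pos l.length with h0 | hpos
  · rw [List.length_eq_zero_iff] at h0; subst h0; simp [cycEdges]
  apply List.ext_getElem
  · simp [length_cycEdges]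
  intro i h1 h2
  have hi : i < l.length := by simpa [length_cycEdges] using h1
  simp only [cycEdges, List.getElem_rotate, List.getElem_zip, List.rotate_rotate,
    List.length_zip, List.length_rotate, Nat.min_self, Nat.mod_add_mod, Nat.add_assoc]

private lemma chain_pairs {r : ℕ → ℕ → Prop} :
    ∀ (c : List ℕ) (i : ℕ), List.Chain r i c → ∀ p ∈ (i :: c).zip c, r p.1 p.2
  | [], _, _, p, hp => by simp at hp
  | b :: s, i, h, p, hp => by
    replace h : r i b ∧ List.Chain r b s := List.isChain_cons_cons.mp h
    rw [List.zip_cons_cons, List.mem_cons] at hp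
    rcases hp with rfl | hp
    · exact h.1
    · exact chain_pairs s b h.2 p hp

private lemma rel_of_pairs {r : ℕ → ℕ → Prop} (hrefl : ∀ x, r x x)
    (htrans : ∀ {x y z}, r x y → r y z → r x z) :
    ∀ (c : List ℕ) (a : ℕ), (∀ p ∈ (a :: c).zip c, r p.1 p.2) → r a (c.getLastD a)
  | [], a, _ => hrefl a
  | b :: s, a, h => by
    rw [List.getLastD_cons]
    have hab : r a b := h (a, b) (by simp)
    have hrest : ∀ p ∈ (b :: s).zip s, r p.1 p.2 := by
      intro p hp; exact h p (by rw [List.zip_cons_cons]; exact List.mem_cons_of_mem _ hp)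
    exact htrans hab (rel_of_pairs hrefl htrans s b hrest)

end Aux

theorem stmt5 (N : ℕ) (E₁ E₂ : ℕ → ℕ → Prop)
    (hsym₁ : Symmetric E₁) (hsym₂ : Symmetric E₂)
    (hsub : ∀ i j, E₁ i j → E₂ i j)
    (hdom : ∀ i j, E₂ i j → i < N ∧ j < N ∧ i ≠ j)
    (χ₁ : ℕ → ℕ → Bool) (hχ₁sym : ∀ i j, χ₁ i j = χ₁ j i)
    (h₁ : SatisfiesTrans E₁ χ₁) :
    ∃ χ₂ : ℕ → ℕ → Bool, (∀ i j, χ₂ i j = χ₂ j i) ∧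
      (∀ i j, E₁ i j → χ₂ i j = χ₁ i j) ∧ SatisfiesTrans E₂ χ₂ := by
  classical
  set S : ℕ → ℕ → Prop := fun a b => E₁ a b ∧ χ₁ a b = true with hS
  have hSsym : Symmetric S := fun a b h => ⟨hsym₁ h.1, (hχ₁sym b a).trans h.2⟩
  set R : ℕ → ℕ → Prop := Relation.ReflTransGen S with hR
  have hRsym : Symmetric R := fun a b h => by
    haveI : Std.Symm S := ⟨fun x y hxy => hSsym hxy⟩
    exact Std.Symm.symm a b h
  have hRrefl : ∀ x, R x x := fun _ => Relation.ReflTransGen.refl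
  have hRtrans : ∀ {x y z : ℕ}, R x y → R y z → R x z :=
    fun h h' => Relation.ReflTransGen.trans h h'
  refine ⟨fun i j => decide (R i j), ?_, ?_, ?_⟩
  · intro i j
    simp only [decide_eq_decide]
    exact ⟨fun h => hRsym h, fun h => hRsym h⟩
  · -- extension property
    intro i j hE
    by_cases hb : χ₁ i j = true
    · rw [hb]
      exact decide_eq_true (Relation.ReflTransGen.single ⟨hE, hb⟩)
    · rw [Bool.not_eq_true] at hb
      rw [hb]
      have hij : i ≠ j := (hdom i j (hsub _ _ hE)).2.2
      rw [decide_eq_false_iff_not]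
      intro hRij
      obtain ⟨c, hc, hlast⟩ := List.exists_isChain_cons_of_relationReflTransGen hRij
      rw [List.getLast_eq_getLastD] at hlast
      match c, hc, hlast with
      | [], _, hlast =>
        exact hij (by simpa using hlast)
      | [x], hc, hlast =>
        rw [List.chain_cons] at hc
        have : χ₁ i x = true := hc.1.2
        rw [show x = j by simpa using hlast, hb] at this
        exact Bool.false_ne_true this
      | x :: y :: s, hc, hlast =>
        apply h₁
        refine ⟨i :: x :: y :: s, ⟨by simp, ?_⟩, ?_⟩
        · intro p hp
          rw [cycEdges_cons, List.mem_append] at hp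
          rcases hp with hp | hp
          · exact (chain_pairs _ _ hc p hp).1
          · rw [List.mem_singleton] at hp
            subst hp
            rw [show (x :: y :: s).getLastD i = j from hlast]
            exact hsym₁ hE
        · rw [numZeroEdges, cycEdges_cons, List.filter_append]
          have h1 : ((i :: x :: y :: s).zip (x :: y :: s)).filter
              (fun p => !χ₁ p.1 p.2) = [] := by
            rw [List.filter_eq_nil_iff]
            intro p hp
            have := (chain_pairs _ _ hc p hp).2
            simp [this]
          rw [h1, List.nil_append]
          have h2 : χ₁ ((x :: y :: s).getLastD i) i = false := by
            rw [show (x :: y :: s).getLastD i = j from hlast, hχ₁sym, hb]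
          simp only [List.filter_singleton, h2, Bool.not_false, cond_true,
            List.length_singleton]
  · -- SatisfiesTrans E₂
    rintro ⟨l, ⟨hl3, _hlE⟩, hone⟩
    rw [numZeroEdges] at hone
    obtain ⟨p, hp⟩ := List.length_eq_one_iff.mp hone
    have hpmem : p ∈ (cycEdges l).filter (fun q => !decide (R q.1 q.2)) := by
      rw [hp]; exact List.mem_singleton_self p
    rw [List.mem_filter] at hpmem
    obtain ⟨t, ht, hget⟩ := List.getElem_of_mem hpmem.1
    have hfp : ¬ R p.1 p.2 := by
      have := hpmem.2
      simp only [Bool.not_eq_true', decide_eq_false_iff_not] at this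
      exact this
    have hklen : t < l.length := by rwa [length_cycEdges] at ht
    set l' := l.rotate (t + 1) with hl'
    have hlen' : l'.length = l.length := by simp [hl']
    have hC : cycEdges l' = (cycEdges l).rotate (t + 1) := cycEdges_rotate l (t + 1)
    obtain ⟨a, c, hac⟩ := List.exists_cons_of_ne_nil
      (show l' ≠ [] by intro h; rw [h] at hlen'; simp at hlen'; omega)
    have hclen : c.length + 1 = l.length := by
      rw [← hlen', hac]; simp
    -- the closing edge of l' is p
    have hEq : (a :: c).zip c ++ [(c.getLastD a, a)] = (cycEdges l).rotate (t + 1) := by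
      rw [← cycEdges_cons, ← hac]; exact hC
    have hlenA : ((a :: c).zip c).length = c.length := by simp
    have hmod : (c.length + (t + 1)) % l.length = t := by
      rw [show c.length + (t + 1) = l.length + t by omega, Nat.add_mod_left,
        Nat.mod_eq_of_lt hklen]
    have hlast : (c.getLastD a, a) = p := by
      have h2 := List.getElem_of_eq hEq (show c.length <
          ((a :: c).zip c ++ [(c.getLastD a, a)]).length by simp)
      rw [List.getElem_concat_length hlenA.symm] at h2
      rw [h2, List.getElem_rotate]
      simp only [length_cycEdges, hmod]
      exact hget
    -- all other edges satisfy R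
    have hperm : (cycEdges l').Perm (cycEdges l) := by rw [hC]; exact List.rotate_perm _ _
    have hfl' : ((cycEdges l').filter (fun q => !decide (R q.1 q.2))).length = 1 := by
      rw [(hperm.filter _).length_eq, hone]
    rw [hac, cycEdges_cons, hlast, List.filter_append] at hfl'
    have hfp' : (!decide (R p.1 p.2)) = true := by simp [hfp]
    rw [List.filter_singleton, hfp', cond_true] at hfl'
    rw [List.length_append, List.length_singleton] at hfl'
    have hA : ((a :: c).zip c).filter (fun q => !decide (R q.1 q.2)) = [] := by
      rw [← List.length_eq_zero_iff]; omega
    rw [List.filter_eq_nil_iff] at hA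
    have hall : ∀ q ∈ (a :: c).zip c, R q.1 q.2 := by
      intro q hq
      have := hA q hq
      simpa using this
    have hchain : R a (c.getLastD a) := rel_of_pairs hRrefl hRtrans c a hall
    have : R p.1 p.2 := by
      rw [← hlast]
      exact hRsym hchain
    exact hfp this
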